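/- Let P be a set of n points in convex position in the plane, n even, n ≥ 4, with no three collinear. Then every plane (non-crossing) perfect matching on P contains at least two edges of the convex hull of P, i.e., at least two edges joining consecutive points in the cyclic order of P. -/

import Mathlib

noncomputable section

/-- Points of the Euclidean plane. -/
abbrev Pt : Type := EuclideanSpace ℝ (Fin 2)

/-- Two straight segments *cross* if they share a point interior to both. -/
def SegCross (a b c d : Pt) : Prop :=
  (openSegment ℝ a b ∩ openSegment ℝ c d).Nonempty

/-- Two edges (unordered pairs of points) cross. -/
def EdgesCross (e f : Sym2 Pt) : Prop :=
  ∃ a b c d : Pt, e = s(a, b) ∧ f = s(c, d) ∧ SegCross a b c d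

/-- `M` is a perfect matching on the point set `P`: a set of non-degenerate edges with
endpoints in `P` such that every point of `P` lies in exactly one edge. -/
def IsPerfMatch (P : Set Pt) (M : Set (Sym2 Pt)) : Prop :=
  (∀ e ∈ M, ¬ e.IsDiag ∧ ∀ x ∈ e, x ∈ P) ∧ ∀ x ∈ P, ∃! e, e ∈ M ∧ x ∈ e

/-- A plane (non-crossing) perfect matching on `P`. -/
def IsPlaneMatch (P : Set Pt) (M : Set (Sym2 Pt)) : Prop :=
  IsPerfMatch P M ∧ M.Pairwise fun e f => ¬ EdgesCross e f

/-- `P` is in convex position: every point of `P` is a vertex of the convex hull. -/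
def ConvexPosition (P : Set Pt) : Prop :=
  ∀ x ∈ P, x ∉ convexHull ℝ (P \ {x})

/-- No three points of `P` are collinear. -/
def NoThreeCollinear (P : Set Pt) : Prop :=
  ∀ x ∈ P, ∀ y ∈ P, ∀ z ∈ P, x ≠ y → x ≠ z → y ≠ z →
    ¬ Collinear ℝ ({x, y, z} : Set Pt)

/-- `e` is an edge of the convex hull of `P`: its endpoints are distinct points of `P` and
the segment joining them lies on the boundary of the convex hull of `P`. -/
def IsHullEdge (P : Set Pt) (e : Sym2 Pt) : Prop :=
  ∃ a b : Pt, e = s(a, b) ∧ a ∈ P ∧ b ∈ P ∧ a ≠ b ∧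
    segment ℝ a b ⊆ frontier (convexHull ℝ P)

/-! ### Auxiliary machinery -/

/-- Signed area / orientation determinant. -/
def sg (x y z : Pt) : ℝ :=
  (y 0 - x 0) * (z 1 - x 1) - (y 1 - x 1) * (z 0 - x 0)

lemma sg_swap (x y z : Pt) : sg y x z = - sg x y z := by unfold sg; ring

lemma sg_affine (x y z1 z2 : Pt) (t s : ℝ) (h : t + s = 1) :
    sg x y (t • z1 + s • z2) = t * sg x y z1 + s * sg x y z2 := by
  have hs : s = 1 - t := by linarith
  subst hs
  simp only [sg, PiLp.add_apply, PiLp.smul_apply, smul_eq_mul]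
  ring

lemma sg_self_left (x y : Pt) : sg x y x = 0 := by unfold sg; ring
lemma sg_self_right (x y : Pt) : sg x y y = 0 := by unfold sg; ring

lemma pt_ext {x y : Pt} (h0 : x 0 = y 0) (h1 : x 1 = y 1) : x = y := by
  ext i; fin_cases i <;> assumption

lemma mem_line {x y p : Pt} (hxy : x ≠ y) (h : sg x y p = 0) :
    ∃ r : ℝ, p = (1 - r) • x + r • y := by
  unfold sg at h
  by_cases h0 : y 0 - x 0 = 0
  · have h1 : y 1 - x 1 ≠ 0 := by
      intro h1; exact hxy (pt_ext (by linarith) (by linarith)).symm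
    refine ⟨(p 1 - x 1) / (y 1 - x 1), pt_ext ?_ ?_⟩ <;>
      simp only [PiLp.add_apply, PiLp.smul_apply, smul_eq_mul] <;> field_simp <;> nlinarith
  · refine ⟨(p 0 - x 0) / (y 0 - x 0), pt_ext ?_ ?_⟩ <;>
      simp only [PiLp.add_apply, PiLp.smul_apply, smul_eq_mul] <;> field_simp <;> nlinarith

lemma collinear_of_sg_eq_zero {x y z : Pt} (hxy : x ≠ y) (h : sg x y z = 0) :
    Collinear ℝ ({x, y, z} : Set Pt) := by
  obtain ⟨r, hr⟩ := mem_line hxy h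
  rw [collinear_iff_of_mem (Set.mem_insert x {y, z})]
  refine ⟨y - x, ?_⟩
  intro p hp
  simp only [Set.mem_insert_iff, Set.mem_singleton_iff] at hp
  rcases hp with rfl | rfl | rfl
  · exact ⟨0, by simp⟩
  · exact ⟨1, by simp⟩
  · exact ⟨r, by rw [hr, vadd_eq_add]; module⟩

/-- If two points of `P` lie strictly on opposite sides of the line through `x, y ∈ P`,
then the open segments cross (uses convex position). -/
lemma cross_of_sides {P : Set Pt} (hconv : ConvexPosition P) {x y u v : Pt}
    (hx : x ∈ P) (hy : y ∈ P) (hxy : x ≠ y) (hu : u ∈ P) (hv : v ∈ P)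
    (hσu : 0 < sg x y u) (hσv : sg x y v < 0) :
    (openSegment ℝ x y ∩ openSegment ℝ u v).Nonempty := by
  have hD : 0 < sg x y u - sg x y v := by linarith
  set t : ℝ := sg x y u / (sg x y u - sg x y v) with ht
  have ht0 : 0 < t := div_pos hσu hD
  have ht1 : t < 1 := by rw [div_lt_one hD]; linarith
  set p : Pt := (1 - t) • u + t • v with hp
  have hpuv : p ∈ openSegment ℝ u v := ⟨1 - t, t, by linarith, ht0, by ring, rfl⟩
  have hσp : sg x y p = 0 := by
    rw [hp, sg_affine x y u v (1 - t) t (by ring)]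
    rw [ht]; field_simp; ring
  obtain ⟨r, hr⟩ := mem_line hxy hσp
  have hux : u ≠ x := fun h => by rw [h, sg_self_left] at hσu; linarith
  have hvx : v ≠ x := fun h => by rw [h, sg_self_left] at hσv; linarith
  have huy : u ≠ y := fun h => by rw [h, sg_self_right] at hσu; linarith
  have hvy : v ≠ y := fun h => by rw [h, sg_self_right] at hσv; linarith
  rcases le_or_gt r 0 with hr0 | hr0
  · exfalso
    have h1r : (0:ℝ) < 1 - r := by linarith
    have hx' : x = (1 / (1 - r)) • p + (-r / (1 - r)) • y := by
      rw [hr]; match_scalars <;> field_simp <;> ring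
    have hxseg : x ∈ segment ℝ p y :=
      ⟨1 / (1 - r), -r / (1 - r), by positivity, div_nonneg (by linarith) (by linarith),
        by field_simp; ring, hx'.symm⟩
    have hpc : p ∈ convexHull ℝ ({u, v, y} : Set Pt) := by
      have : p ∈ segment ℝ u v := openSegment_subset_segment ℝ u v hpuv
      rw [← convexHull_pair] at this
      exact convexHull_mono (by intro z hz; simp at hz ⊢; tauto) this
    have hyc : y ∈ convexHull ℝ ({u, v, y} : Set Pt) :=
      subset_convexHull ℝ _ (by simp)
    have hxc : x ∈ convexHull ℝ ({u, v, y} : Set Pt) :=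
      (convex_convexHull ℝ _).segment_subset hpc hyc hxseg
    refine hconv x hx (convexHull_mono ?_ hxc)
    intro z hz
    simp only [Set.mem_insert_iff, Set.mem_singleton_iff] at hz
    rcases hz with rfl | rfl | rfl
    · exact ⟨hu, by simpa using hux⟩
    · exact ⟨hv, by simpa using hvx⟩
    · exact ⟨hy, by simpa using (Ne.symm hxy)⟩
  rcases lt_or_ge r 1 with hr1 | hr1
  · exact ⟨p, ⟨1 - r, r, by linarith, hr0, by ring, hr.symm⟩, hpuv⟩
  · exfalso
    have hrpos : (0:ℝ) < r := by linarith
    have hy' : y = (1 / r) • p + ((r - 1) / r) • x := by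
      rw [hr]; match_scalars <;> field_simp <;> ring
    have hyseg : y ∈ segment ℝ p x :=
      ⟨1 / r, (r - 1) / r, by positivity, div_nonneg (by linarith) (by linarith),
        by field_simp; ring, hy'.symm⟩
    have hpc : p ∈ convexHull ℝ ({u, v, x} : Set Pt) := by
      have : p ∈ segment ℝ u v := openSegment_subset_segment ℝ u v hpuv
      rw [← convexHull_pair] at this
      exact convexHull_mono (by intro z hz; simp at hz ⊢; tauto) this
    have hxc : x ∈ convexHull ℝ ({u, v, x} : Set Pt) :=
      subset_convexHull ℝ _ (by simp)
    have hyc : y ∈ convexHull ℝ ({u, v, x} : Set Pt) :=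
      (convex_convexHull ℝ _).segment_subset hpc hxc hyseg
    refine hconv y hy (convexHull_mono ?_ hyc)
    intro z hz
    simp only [Set.mem_insert_iff, Set.mem_singleton_iff] at hz
    rcases hz with rfl | rfl | rfl
    · exact ⟨hu, by simpa using huy⟩
    · exact ⟨hv, by simpa using hvy⟩
    · exact ⟨hx, by simpa using hxy⟩

/-- If all points of `P` lie (weakly) on one side of the line `ab`, the segment between
`a` and `b` lies on the frontier of the convex hull. -/
lemma seg_sub_frontier {P : Set Pt} {a b : Pt} (hab : a ≠ b) (ha : a ∈ P) (hb : b ∈ P)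
    (hside : ∀ z ∈ P, sg a b z ≤ 0) :
    segment ℝ a b ⊆ frontier (convexHull ℝ P) := by
  have hhalf : convexHull ℝ P ⊆ {z : Pt | sg a b z ≤ 0} := by
    apply convexHull_min hside
    intro z1 hz1 z2 hz2 t s ht hs hts
    have hz1' : sg a b z1 ≤ 0 := hz1
    have hz2' : sg a b z2 ≤ 0 := hz2
    show sg a b (t • z1 + s • z2) ≤ 0
    rw [sg_affine a b z1 z2 t s hts]
    have := mul_nonneg ht (neg_nonneg.2 hz1')
    have := mul_nonneg hs (neg_nonneg.2 hz2')
    nlinarith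
  intro w hw
  obtain ⟨t, s, ht, hs, hts, hw'⟩ := hw
  have hσw : sg a b w = 0 := by
    rw [← hw', sg_affine a b a b t s hts, sg_self_left, sg_self_right]; ring
  constructor
  · exact subset_closure (segment_subset_convexHull ha hb ⟨t, s, ht, hs, hts, hw'⟩)
  · intro hint
    rw [mem_interior_iff_mem_nhds, Metric.mem_nhds_iff] at hint
    obtain ⟨ε, hε, hball⟩ := hint
    set ν : Pt := !₂[-(b 1 - a 1), b 0 - a 0]
    have hν0 : ν 0 = -(b 1 - a 1) := rfl
    have hν1 : ν 1 = b 0 - a 0 := rfl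
    have hnormsq : (b 0 - a 0) ^ 2 + (b 1 - a 1) ^ 2 > 0 := by
      rcases (fun h => hab (pt_ext (by linarith [h.1]) (by linarith [h.2])) :
          ¬ (b 0 - a 0 = 0 ∧ b 1 - a 1 = 0)) |> not_and_or.mp with h | h
      · nlinarith [sq_nonneg (b 1 - a 1), mul_self_pos.mpr h]
      · nlinarith [sq_nonneg (b 0 - a 0), mul_self_pos.mpr h]
    have hνne : ν ≠ 0 := by
      intro h
      have h0 : ν 0 = 0 := by rw [h]; rfl
      have h1 : ν 1 = 0 := by rw [h]; rfl
      rw [hν0] at h0; rw [hν1] at h1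
      nlinarith
    have hνnorm : 0 < ‖ν‖ := norm_pos_iff.mpr hνne
    set c : ℝ := ε / (2 * ‖ν‖) with hc
    have hcpos : 0 < c := by positivity
    have hmem : w + c • ν ∈ Metric.ball w ε := by
      rw [Metric.mem_ball, dist_self_add_left, norm_smul, Real.norm_of_nonneg hcpos.le, hc]
      rw [div_mul_eq_mul_div, mul_comm]
      rw [div_lt_iff₀ (by positivity)]
      nlinarith
    have hσ : sg a b (w + c • ν) = c * ((b 0 - a 0)^2 + (b 1 - a 1)^2) := by
      simp only [sg, PiLp.add_apply, PiLp.smul_apply, smul_eq_mul, hν0, hν1]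
      unfold sg at hσw
      nlinarith [hσw]
    have := hhalf (hball hmem)
    simp only [Set.mem_setOf_eq] at this
    nlinarith

/-- The set of points of `P` strictly on the positive side of the oriented line `cd`. -/
def sPos (P : Set Pt) (c d : Pt) : Set Pt := {z | z ∈ P ∧ 0 < sg c d z}

lemma sg_ne {P : Set Pt} (hcol : NoThreeCollinear P) {x y z : Pt}
    (hx : x ∈ P) (hy : y ∈ P) (hz : z ∈ P) (hxy : x ≠ y) (hxz : x ≠ z) (hyz : y ≠ z) :
    sg x y z ≠ 0 :=
  fun h => hcol x hx y hy z hz hxy hxz hyz (collinear_of_sg_eq_zero hxy h)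

lemma partner_exists {P : Set Pt} {M : Set (Sym2 Pt)} (hM : IsPlaneMatch P M) {x : Pt}
    (hx : x ∈ P) : ∃ y, y ∈ P ∧ x ≠ y ∧ s(x, y) ∈ M := by
  obtain ⟨e, ⟨heM, hxe⟩, -⟩ := hM.1.2 x hx
  obtain ⟨hdiag, hmem⟩ := hM.1.1 e heM
  refine ⟨Sym2.Mem.other hxe, hmem _ (Sym2.other_mem hxe), ?_, ?_⟩
  · intro h
    exact hdiag (by rw [← Sym2.other_spec hxe, ← h]; exact Sym2.mk_isDiag_iff.mpr rfl)
  · rw [Sym2.other_spec hxe]; exact heM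

lemma edge_eq {P : Set Pt} {M : Set (Sym2 Pt)} (hM : IsPlaneMatch P M) {x : Pt}
    {e f : Sym2 Pt} (hx : x ∈ P) (he : e ∈ M) (hf : f ∈ M) (hxe : x ∈ e) (hxf : x ∈ f) :
    e = f := by
  obtain ⟨g, -, hg⟩ := hM.1.2 x hx
  rw [hg e ⟨he, hxe⟩, hg f ⟨hf, hxf⟩]

lemma no_cross {P : Set Pt} {M : Set (Sym2 Pt)} (hM : IsPlaneMatch P M) {x y u v : Pt}
    (h1 : s(x, y) ∈ M) (h2 : s(u, v) ∈ M) (hne : s(x, y) ≠ s(u, v)) :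
    ¬ SegCross x y u v :=
  fun hc => hM.2 h1 h2 hne ⟨x, y, u, v, rfl, rfl, hc⟩

/-- Main induction: inside any nonempty open side of a matching edge, there is a matching
edge having all other points of `P` strictly on one side. -/
lemma main_lemma {P : Set Pt} {M : Set (Sym2 Pt)} (hconv : ConvexPosition P)
    (hcol : NoThreeCollinear P) (hfin : P.Finite) (hM : IsPlaneMatch P M) :
    ∀ k : ℕ, ∀ c d : Pt, c ∈ P → d ∈ P → c ≠ d → s(c, d) ∈ M →
      (sPos P c d).Nonempty → (sPos P c d).ncard ≤ k →
      ∃ a b : Pt, s(a, b) ∈ M ∧ a ≠ b ∧ a ∈ sPos P c d ∧ b ∈ sPos P c d ∧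
        ∀ z ∈ P, z ≠ a → z ≠ b → sg a b z < 0 := by
  intro k
  induction k with
  | zero =>
    intro c d _ _ _ _ hne hle
    have : (sPos P c d).ncard = 0 := Nat.le_zero.mp hle
    rw [Set.ncard_eq_zero (hfin.subset fun z hz => hz.1)] at this
    exact absurd (this ▸ hne) (by simp)
  | succ k ih =>
    intro c d hc hd hcd hcdM hne hle
    obtain ⟨x1, hx1P, hx1σ⟩ := hne
    have hx1c : x1 ≠ c := fun h => by rw [h, sg_self_left] at hx1σ; linarith
    have hx1d : x1 ≠ d := fun h => by rw [h, sg_self_right] at hx1σ; linarith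
    obtain ⟨y1, hy1P, hx1y1, hy1M⟩ := partner_exists hM hx1P
    have hEne : s(x1, y1) ≠ s(c, d) := by
      intro h
      have : x1 ∈ s(c, d) := h ▸ Sym2.mem_mk_left x1 y1
      rcases Sym2.mem_iff.mp this with h' | h'
      · exact hx1c h'
      · exact hx1d h'
    have hy1c : y1 ≠ c := by
      intro h
      apply hEne
      exact edge_eq hM hc hy1M hcdM (h ▸ Sym2.mem_mk_right x1 y1) (Sym2.mem_mk_left c d)
    have hy1d : y1 ≠ d := by
      intro h
      apply hEne
      exact edge_eq hM hd hy1M hcdM (h ▸ Sym2.mem_mk_right x1 y1) (Sym2.mem_mk_right c d)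
    have hy1σ : 0 < sg c d y1 := by
      rcases (sg_ne hcol hc hd hy1P hcd (Ne.symm hy1c) (Ne.symm hy1d)).lt_or_gt with h | h
      · exact absurd (cross_of_sides hconv hc hd hcd hx1P hy1P hx1σ h)
          (no_cross hM hcdM hy1M (Ne.symm hEne))
      · exact h
    -- the key step, for a correctly oriented matching edge inside the side
    have key : ∀ a1 b1 : Pt, a1 ∈ P → b1 ∈ P → a1 ≠ b1 → s(a1, b1) ∈ M →
        0 < sg c d a1 → 0 < sg c d b1 → sg a1 b1 c < 0 →
        ∃ a b : Pt, s(a, b) ∈ M ∧ a ≠ b ∧ a ∈ sPos P c d ∧ b ∈ sPos P c d ∧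
          ∀ z ∈ P, z ≠ a → z ≠ b → sg a b z < 0 := by
      intro a1 b1 ha1 hb1 ha1b1 hE hσa1 hσb1 hcneg
      have ha1c : a1 ≠ c := fun h => by rw [h, sg_self_left] at hσa1; linarith
      have ha1d : a1 ≠ d := fun h => by rw [h, sg_self_right] at hσa1; linarith
      have hb1c : b1 ≠ c := fun h => by rw [h, sg_self_left] at hσb1; linarith
      have hb1d : b1 ≠ d := fun h => by rw [h, sg_self_right] at hσb1; linarith
      have hEne' : s(a1, b1) ≠ s(c, d) := by
        intro h
        have : a1 ∈ s(c, d) := h ▸ Sym2.mem_mk_left a1 b1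
        rcases Sym2.mem_iff.mp this with h' | h'
        · exact ha1c h'
        · exact ha1d h'
      have hdneg : sg a1 b1 d < 0 := by
        rcases (sg_ne hcol ha1 hb1 hd ha1b1 ha1d hb1d).lt_or_gt with h | h
        · exact h
        · exfalso
          have hdc : s(d, c) ∈ M := by rw [Sym2.eq_swap]; exact hcdM
          have hne2 : s(a1, b1) ≠ s(d, c) := fun h => hEne' (h.trans Sym2.eq_swap)
          exact no_cross hM hE hdc hne2
            (cross_of_sides hconv ha1 hb1 ha1b1 hd hc h hcneg)
      have hcont : ∀ z, z ∈ P → 0 < sg a1 b1 z → z ∈ sPos P c d := by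
        intro z hz hσz
        have hzc : z ≠ c := fun h => by rw [h] at hσz; linarith
        have hzd : z ≠ d := fun h => by rw [h] at hσz; linarith
        refine ⟨hz, ?_⟩
        rcases (sg_ne hcol hc hd hz hcd (Ne.symm hzc) (Ne.symm hzd)).lt_or_gt with h | h
        · exfalso
          obtain ⟨q, hq1, hq2⟩ := cross_of_sides hconv hc hd hcd ha1 hz hσa1 h
          obtain ⟨t, s, ht, hs, hts, hq⟩ := hq1
          obtain ⟨t', s', ht', hs', hts', hq'⟩ := hq2
          have e1 : sg a1 b1 q = t * sg a1 b1 c + s * sg a1 b1 d := by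
            rw [← hq, sg_affine a1 b1 c d t s hts]
          have e2 : sg a1 b1 q = t' * sg a1 b1 a1 + s' * sg a1 b1 z := by
            rw [← hq', sg_affine a1 b1 a1 z t' s' hts']
          rw [sg_self_left] at e2
          nlinarith
        · exact h
      by_cases hempty : (sPos P a1 b1).Nonempty
      · -- recurse on the strictly smaller side
        have hsub : sPos P a1 b1 ⊆ sPos P c d := fun z hz => hcont z hz.1 hz.2
        have hss : sPos P a1 b1 ⊂ sPos P c d := by
          refine ⟨hsub, fun hsup => ?_⟩
          have : a1 ∈ sPos P a1 b1 := hsup ⟨ha1, hσa1⟩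
          have := this.2
          rw [sg_self_left] at this
          linarith
        have hlt : (sPos P a1 b1).ncard < (sPos P c d).ncard :=
          Set.ncard_lt_ncard hss (hfin.subset fun z hz => hz.1)
        obtain ⟨a, b, haM, hab, haS, hbS, hlast⟩ :=
          ih a1 b1 ha1 hb1 ha1b1 hE hempty (by omega)
        exact ⟨a, b, haM, hab, hsub haS, hsub hbS, hlast⟩
      · -- the side is empty: this edge works
        refine ⟨a1, b1, hE, ha1b1, ⟨ha1, hσa1⟩, ⟨hb1, hσb1⟩, ?_⟩
        intro z hz hza hzb
        rcases (sg_ne hcol ha1 hb1 hz ha1b1 (Ne.symm hza) (Ne.symm hzb)).lt_or_gt with h | h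
        · exact h
        · exact absurd (⟨z, hz, h⟩ : (sPos P a1 b1).Nonempty) hempty
    rcases (sg_ne hcol hx1P hy1P hc hx1y1 hx1c hy1c).lt_or_gt with h | h
    · exact key x1 y1 hx1P hy1P hx1y1 hy1M hx1σ hy1σ h
    · have h' : sg y1 x1 c < 0 := by rw [sg_swap]; linarith
      have hyx : s(y1, x1) ∈ M := by rw [Sym2.eq_swap]; exact hy1M
      exact key y1 x1 hy1P hx1P hx1y1.symm hyx hy1σ hx1σ h'

lemma mk_hull {P : Set Pt} {a b : Pt} (ha : a ∈ P) (hb : b ∈ P) (hab : a ≠ b)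
    (hneg : ∀ z ∈ P, z ≠ a → z ≠ b → sg a b z < 0) : IsHullEdge P s(a, b) := by
  refine ⟨a, b, rfl, ha, hb, hab, seg_sub_frontier hab ha hb ?_⟩
  intro z hz
  by_cases hza : z = a
  · rw [hza, sg_self_left]
  by_cases hzb : z = b
  · rw [hzb, sg_self_right]
  exact (hneg z hz hza hzb).le

/-- For `n` points in convex position (`n` even, `n ≥ 4`, no three collinear),
every plane perfect matching on `P` contains at least two convex hull edges of `P`. -/
theorem plane_matching_two_hull_edges (n : ℕ) (hn : Even n) (h4 : 4 ≤ n)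
    (P : Set Pt) (hfin : P.Finite) (hcard : P.ncard = n)
    (hconv : ConvexPosition P) (hcol : NoThreeCollinear P)
    (M : Set (Sym2 Pt)) (hM : IsPlaneMatch P M) :
    ∃ e ∈ M, ∃ f ∈ M, e ≠ f ∧ IsHullEdge P e ∧ IsHullEdge P f := by
  classical
  have hPne : P.Nonempty := Set.nonempty_of_ncard_ne_zero (by omega)
  obtain ⟨c, hc⟩ := hPne
  obtain ⟨d, hd, hcd, hcdM⟩ := partner_exists hM hc
  have hdcM : s(d, c) ∈ M := by rw [Sym2.eq_swap]; exact hcdM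
  -- P \ {c, d} is nonempty
  have hsub : P ⊆ (P \ {c, d}) ∪ {c, d} := by
    intro z hz
    by_cases h : z ∈ ({c, d} : Set Pt)
    · exact Or.inr h
    · exact Or.inl ⟨hz, h⟩
  have hcount : P.ncard ≤ (P \ {c, d}).ncard + 2 := by
    calc P.ncard ≤ ((P \ {c, d}) ∪ {c, d}).ncard :=
          Set.ncard_le_ncard hsub (hfin.diff.union (by
            exact (Set.finite_singleton d).insert c))
    _ ≤ (P \ {c, d}).ncard + ({c, d} : Set Pt).ncard := Set.ncard_union_le _ _
    _ ≤ (P \ {c, d}).ncard + 2 := by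
        have := Set.ncard_insert_le c ({d} : Set Pt)
        simp [Set.ncard_singleton] at this ⊢
        omega
  have hw : (P \ {c, d}).Nonempty := Set.nonempty_of_ncard_ne_zero (by omega)
  obtain ⟨w, hwP, hwcd⟩ := hw
  have hwc : w ≠ c := fun h => hwcd (by simp [h])
  have hwd : w ≠ d := fun h => hwcd (by simp [h])
  have hwσ := sg_ne hcol hc hd hwP hcd (Ne.symm hwc) (Ne.symm hwd)
  -- helper to produce a hull edge from a side
  have mk : ∀ c' d' : Pt, c' ∈ P → d' ∈ P → c' ≠ d' → s(c', d') ∈ M →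
      (sPos P c' d').Nonempty →
      ∃ a b : Pt, s(a, b) ∈ M ∧ a ≠ b ∧ a ∈ sPos P c' d' ∧ b ∈ sPos P c' d' ∧
        IsHullEdge P s(a, b) := by
    intro c' d' hc' hd' hcd' hM' hne'
    obtain ⟨a, b, haM, hab, haS, hbS, hneg⟩ :=
      main_lemma hconv hcol hfin hM (sPos P c' d').ncard c' d' hc' hd' hcd' hM' hne' le_rfl
    exact ⟨a, b, haM, hab, haS, hbS, mk_hull haS.1 hbS.1 hab hneg⟩
  by_cases h1 : (sPos P c d).Nonempty
  · by_cases h2 : (sPos P d c).Nonempty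
    · obtain ⟨a, b, haM, hab, haS, hbS, hHull⟩ := mk c d hc hd hcd hcdM h1
      obtain ⟨a', b', haM', hab', haS', hbS', hHull'⟩ := mk d c hd hc (Ne.symm hcd) hdcM h2
      refine ⟨s(a, b), haM, s(a', b'), haM', ?_, hHull, hHull'⟩
      intro h
      have : a ∈ s(a', b') := h ▸ Sym2.mem_mk_left a b
      rcases Sym2.mem_iff.mp this with h' | h'
      · have h1' := haS.2
        have h2' := haS'.2
        rw [← h'] at h2'
        rw [sg_swap] at h2'
        linarith
      · have h1' := haS.2
        have h2' := hbS'.2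
        rw [← h'] at h2'
        rw [sg_swap] at h2'
        linarith
    · -- sPos P d c is empty : s(d, c) itself is a hull edge
      obtain ⟨a, b, haM, hab, haS, hbS, hHull⟩ := mk c d hc hd hcd hcdM h1
      have hHull2 : IsHullEdge P s(d, c) := by
        apply mk_hull hd hc (Ne.symm hcd)
        intro z hz hzd hzc
        rcases (sg_ne hcol hd hc hz (Ne.symm hcd) (Ne.symm hzd) (Ne.symm hzc)).lt_or_gt
          with h | h
        · exact h
        · exact absurd (⟨z, hz, h⟩ : (sPos P d c).Nonempty) h2
      refine ⟨s(a, b), haM, s(d, c), hdcM, ?_, hHull, hHull2⟩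
      intro h
      have : a ∈ s(d, c) := h ▸ Sym2.mem_mk_left a b
      have hσa := haS.2
      rcases Sym2.mem_iff.mp this with h' | h'
      · rw [h', sg_self_right] at hσa; linarith
      · rw [h', sg_self_left] at hσa; linarith
  · -- sPos P c d empty; then sPos P d c is nonempty (contains w)
    have h2 : (sPos P d c).Nonempty := by
      rcases hwσ.lt_or_gt with h | h
      · exact ⟨w, hwP, by rw [sg_swap]; linarith⟩
      · exact absurd (⟨w, hwP, h⟩ : (sPos P c d).Nonempty) h1
    obtain ⟨a, b, haM, hab, haS, hbS, hHull⟩ := mk d c hd hc (Ne.symm hcd) hdcM h2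
    have hHull2 : IsHullEdge P s(c, d) := by
      apply mk_hull hc hd hcd
      intro z hz hzc hzd
      rcases (sg_ne hcol hc hd hz hcd (Ne.symm hzc) (Ne.symm hzd)).lt_or_gt with h | h
      · exact h
      · exact absurd (⟨z, hz, h⟩ : (sPos P c d).Nonempty) h1
    refine ⟨s(a, b), haM, s(c, d), hcdM, ?_, hHull, hHull2⟩
    intro h
    have : a ∈ s(c, d) := h ▸ Sym2.mem_mk_left a b
    have hσa := haS.2
    rcases Sym2.mem_iff.mp this with h' | h'
    · rw [h', sg_self_right] at hσa; linarith
    · rw [h', sg_self_left] at hσa; linarith
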